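/- In the modified ('zombie') process on a tree, where agent i's trajectory is fixed to τ_i and the state of the world is fixed to s, the trajectories of i's neighbors up to time t are mutually independent: Q(σ_{∂i}^t | τ_i, s) = ∏_{j ∈ ∂i} Q(σ_j^t | τ_i^t, s). -/

import Mathlib

open Finset in
private lemma zni_sum_prod_pi {V X : Type*} [Fintype V] [Fintype X] [DecidableEq V]
    (g : V → X → ℝ) : (∑ x : V → X, ∏ v, g v (x v)) = ∏ v, ∑ χ, g v χ :=
  (Fintype.prod_sum g).symm

private lemma zni_factor {V X : Type*} [Fintype V] [Fintype X] [DecidableEq V]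
    (ν : V → X → ℝ) (hν1 : ∀ v, ∑ χ, ν v χ = 1)
    (p : V → Prop) [DecidablePred p]
    (f g : (V → X) → ℝ)
    (hf : ∀ x x', (∀ v, p v → x v = x' v) → f x = f x')
    (hg : ∀ x x', (∀ v, ¬ p v → x v = x' v) → g x = g x') :
    (∑ x : V → X, f x * g x * ∏ v, ν v (x v)) =
    (∑ x : V → X, f x * ∏ v, ν v (x v)) * (∑ x : V → X, g x * ∏ v, ν v (x v)) := by
  classical
  have hXne : ∀ (v : V), Nonempty X := by
    intro v
    by_contra h
    rw [not_nonempty_iff] at h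
    have := hν1 v
    simp at this
  haveI hz : Nonempty ({v // ¬ p v} → X) := by
    by_cases h : Nonempty {v // ¬ p v}
    · obtain ⟨v⟩ := h
      haveI := hXne v.1
      exact ⟨fun _ => Classical.arbitrary X⟩
    · rw [not_nonempty_iff] at h
      exact ⟨fun v => (h.false v).elim⟩
  haveI hy : Nonempty ({v // p v} → X) := by
    by_cases h : Nonempty {v // p v}
    · obtain ⟨v⟩ := h
      haveI := hXne v.1
      exact ⟨fun _ => Classical.arbitrary X⟩
    · rw [not_nonempty_iff] at h
      exact ⟨fun v => (h.false v).elim⟩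
  obtain ⟨z₀⟩ := hz
  obtain ⟨y₀⟩ := hy
  set e := Equiv.piEquivPiSubtypeProd p (fun _ : V => X) with he
  -- weight factorization
  have hw : ∀ (y : {v // p v} → X) (z : {v // ¬ p v} → X),
      (∏ v, ν v (e.symm (y, z) v)) =
      (∏ v : {v // p v}, ν v (y v)) * (∏ v : {v // ¬ p v}, ν v (z v)) := by
    intro y z
    rw [← Fintype.prod_subtype_mul_prod_subtype p (fun v => ν v (e.symm (y, z) v))]
    congr 1
    · exact Fintype.prod_congr _ _ (fun v => by
        simp [he, Equiv.piEquivPiSubtypeProd, v.2])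
    · exact Fintype.prod_congr _ _ (fun v => by
        simp [he, Equiv.piEquivPiSubtypeProd, v.2])
  have hfc : ∀ (y : {v // p v} → X) (z : {v // ¬ p v} → X),
      f (e.symm (y, z)) = f (e.symm (y, z₀)) := by
    intro y z
    apply hf
    intro v hv
    simp [he, Equiv.piEquivPiSubtypeProd, hv]
  have hgc : ∀ (y : {v // p v} → X) (z : {v // ¬ p v} → X),
      g (e.symm (y, z)) = g (e.symm (y₀, z)) := by
    intro y z
    apply hg
    intro v hv
    simp [he, Equiv.piEquivPiSubtypeProd, hv]
  have hsumB : (∑ z : {v // ¬ p v} → X, ∏ v : {v // ¬ p v}, ν v (z v)) = 1 := by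
    rw [zni_sum_prod_pi]
    exact Finset.prod_eq_one (fun v _ => hν1 v)
  have hsumA : (∑ y : {v // p v} → X, ∏ v : {v // p v}, ν v (y v)) = 1 := by
    rw [zni_sum_prod_pi]
    exact Finset.prod_eq_one (fun v _ => hν1 v)
  have hrw : ∀ h : (V → X) → ℝ, (∑ x : V → X, h x) =
      ∑ y : {v // p v} → X, ∑ z : {v // ¬ p v} → X, h (e.symm (y, z)) := by
    intro h
    rw [← Equiv.sum_comp e.symm, Fintype.sum_prod_type]
  rw [hrw, hrw (fun x => f x * ∏ v, ν v (x v)), hrw (fun x => g x * ∏ v, ν v (x v))]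
  have L1 : (∑ y : {v // p v} → X, ∑ z : {v // ¬ p v} → X,
        f (e.symm (y, z)) * ∏ v, ν v (e.symm (y, z) v)) =
      ∑ y, f (e.symm (y, z₀)) * ∏ v : {v // p v}, ν v (y v) := by
    refine Finset.sum_congr rfl (fun y _ => ?_)
    calc (∑ z : {v // ¬ p v} → X, f (e.symm (y, z)) * ∏ v, ν v (e.symm (y, z) v))
        = ∑ z : {v // ¬ p v} → X, (f (e.symm (y, z₀)) * ∏ v : {v // p v}, ν v (y v))
            * ∏ v : {v // ¬ p v}, ν v (z v) := by
          refine Finset.sum_congr rfl (fun z _ => ?_)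
          rw [hfc, hw]; ring
      _ = _ := by rw [← Finset.mul_sum, hsumB, mul_one]
  have L2 : (∑ y : {v // p v} → X, ∑ z : {v // ¬ p v} → X,
        g (e.symm (y, z)) * ∏ v, ν v (e.symm (y, z) v)) =
      ∑ z, g (e.symm (y₀, z)) * ∏ v : {v // ¬ p v}, ν v (z v) := by
    rw [Finset.sum_comm]
    refine Finset.sum_congr rfl (fun z _ => ?_)
    calc (∑ y : {v // p v} → X, g (e.symm (y, z)) * ∏ v, ν v (e.symm (y, z) v))
        = ∑ y : {v // p v} → X, (g (e.symm (y₀, z)) * ∏ v : {v // ¬ p v}, ν v (z v))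
            * ∏ v : {v // p v}, ν v (y v) := by
          refine Finset.sum_congr rfl (fun y _ => ?_)
          rw [hgc, hw]; ring
      _ = _ := by rw [← Finset.mul_sum, hsumA, mul_one]
  rw [L1, L2, Finset.sum_mul_sum]
  refine Finset.sum_congr rfl (fun y _ => Finset.sum_congr rfl (fun z _ => ?_))
  rw [hfc _ z, hgc y₀ z, ← hgc y z, hw]
  ring
theorem zombie_neighbor_independence {V X A : Type*} [Fintype V] [DecidableEq V]
    [Fintype X] [DecidableEq X] [DecidableEq A]
    (G : SimpleGraph V) [DecidableRel G.Adj] (htree : G.IsTree)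
    (upd : V → X → (V → ℕ → A) → ℕ → A)
    (hloc : ∀ v xv (h h' : V → ℕ → A) (t : ℕ),
      (∀ j, G.Adj v j ∨ j = v → ∀ t' < t, h j t' = h' j t') →
      upd v xv h t = upd v xv h' t)
    (i : V) (τ : ℕ → A)
    (ztraj : (V → X) → V → ℕ → A)
    (hz1 : ∀ x t, ztraj x i t = τ t)
    (hz2 : ∀ x v t, v ≠ i →
      ztraj x v t = upd v (x v) (fun j t' => ztraj x j t') t)
    (ν : V → X → ℝ) (hν : ∀ v χ, 0 ≤ ν v χ) (hν1 : ∀ v, ∑ χ, ν v χ = 1)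
    (ω : V → ℕ → A) (t : ℕ) :
    (∑ x : V → X,
        if ∀ j ∈ G.neighborFinset i, ∀ t' ≤ t, ztraj x j t' = ω j t'
        then ∏ v, ν v (x v) else 0) =
    ∏ j ∈ G.neighborFinset i,
      (∑ x : V → X,
        if ∀ t' ≤ t, ztraj x j t' = ω j t'
        then ∏ v, ν v (x v) else 0) := by
  classical
  -- S j v : v is reachable from j avoiding i
  set S : V → V → Prop := fun j v => ∃ w : G.Walk j v, i ∉ w.support with hS
  -- locality: the trajectory at v ∈ S j depends only on signals in S j
  have hloc2 : ∀ t₀ (x x' : V → X) j v, S j v →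
      (∀ u, S j u → x u = x' u) → ztraj x v t₀ = ztraj x' v t₀ := by
    intro t₀
    induction t₀ using Nat.strong_induction_on with
    | _ t₀ IH =>
      intro x x' j v hv hagree
      obtain ⟨w, hw⟩ := hv
      have hvne : v ≠ i := fun h => hw (h ▸ SimpleGraph.Walk.end_mem_support w)
      rw [hz2 x v _ hvne, hz2 x' v _ hvne, hagree v ⟨w, hw⟩]
      apply hloc
      intro u hu t' ht'
      rcases hu with hadj | rfl
      · by_cases hui : u = i
        · subst hui; rw [hz1, hz1]
        · refine IH t' ht' x x' j u ⟨w.concat hadj, ?_⟩ hagree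
          simp only [SimpleGraph.Walk.support_concat, List.concat_eq_append,
            List.mem_append, List.mem_singleton]
          rintro (h | h)
          · exact hw h
          · exact hui h.symm
      · exact IH t' ht' x x' j ‹V› ⟨w, hw⟩ hagree
  -- disjointness of the subtrees hanging off distinct neighbors of i
  have hdisj : ∀ j j', G.Adj i j → G.Adj i j' → j ≠ j' → ∀ v, S j v → ¬ S j' v := by
    rintro j j' hj hj' hne v ⟨w, hw⟩ ⟨w', hw'⟩
    apply hne
    have hb : i ∉ w.bypass.support := fun h => hw (w.support_bypass_subset h)
    have hb' : i ∉ w'.bypass.support := fun h => hw' (w'.support_bypass_subset h)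
    have h1 : (SimpleGraph.Walk.cons hj w.bypass).IsPath := w.bypass_isPath.cons hb
    have h2 : (SimpleGraph.Walk.cons hj' w'.bypass).IsPath := w'.bypass_isPath.cons hb'
    obtain ⟨p, -, hp⟩ := htree.existsUnique_path i v
    have heq : SimpleGraph.Walk.cons hj w.bypass = SimpleGraph.Walk.cons hj' w'.bypass :=
      (hp _ h1).trans (hp _ h2).symm
    have hsup := congrArg SimpleGraph.Walk.support heq
    rw [SimpleGraph.Walk.support_cons, SimpleGraph.Walk.support_cons,
      w.bypass.support_eq_cons, w'.bypass.support_eq_cons] at hsup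
    exact (List.cons.injEq _ _ _ _).mp ((List.cons.injEq _ _ _ _).mp hsup).2 |>.1
  -- indicator functions
  set f : V → (V → X) → ℝ :=
    fun j x => if ∀ t' ≤ t, ztraj x j t' = ω j t' then 1 else 0 with hf
  have hfdep : ∀ j, G.Adj i j → ∀ x x', (∀ u, S j u → x u = x' u) → f j x = f j x' := by
    intro j hj x x' hagree
    have hSj : S j j := ⟨SimpleGraph.Walk.nil, by simp [hj.ne]⟩
    simp only [hf]
    congr 1
    refine propext (forall_congr' fun t' => forall_congr' fun ht' => ?_)
    rw [hloc2 t' x x' j j hSj hagree]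
  -- the key factorization by induction on the neighbor set
  have key : ∀ J : Finset V, J ⊆ G.neighborFinset i →
      (∑ x : V → X, (∏ j ∈ J, f j x) * ∏ v, ν v (x v)) =
      ∏ j ∈ J, ∑ x : V → X, f j x * ∏ v, ν v (x v) := by
    intro J
    induction J using Finset.induction with
    | empty =>
      intro _
      simp only [Finset.prod_empty, one_mul]
      rw [zni_sum_prod_pi]
      exact Finset.prod_eq_one (fun v _ => hν1 v)
    | @insert a J' ha IH =>
      intro hsub
      have hai : G.Adj i a := by
        have := hsub (Finset.mem_insert_self a J')
        rwa [G.mem_neighborFinset] at this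
      have hsub' : J' ⊆ G.neighborFinset i :=
        fun j hj => hsub (Finset.mem_insert_of_mem hj)
      have step : (∑ x : V → X, (∏ j ∈ insert a J', f j x) * ∏ v, ν v (x v)) =
          (∑ x : V → X, f a x * ∏ v, ν v (x v)) *
          (∑ x : V → X, (∏ j ∈ J', f j x) * ∏ v, ν v (x v)) := by
        have := zni_factor ν hν1 (S a) (f a) (fun x => ∏ j ∈ J', f j x)
          (hfdep a hai)
          (fun x x' hagree => Finset.prod_congr rfl (fun j hj => by
            have hji : G.Adj i j := by
              have := hsub' hj
              rwa [G.mem_neighborFinset] at this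
            have hne : a ≠ j := fun h => ha (h ▸ hj)
            refine hfdep j hji x x' (fun u hu => hagree u ?_)
            exact hdisj j a hji hai (Ne.symm hne) u hu))
        rw [← this]
        refine Finset.sum_congr rfl (fun x _ => ?_)
        rw [Finset.prod_insert ha]
      rw [step, IH hsub', Finset.prod_insert ha]
  -- conclude
  have lhs_eq : (∑ x : V → X,
      if ∀ j ∈ G.neighborFinset i, ∀ t' ≤ t, ztraj x j t' = ω j t'
      then ∏ v, ν v (x v) else 0) =
      ∑ x : V → X, (∏ j ∈ G.neighborFinset i, f j x) * ∏ v, ν v (x v) := by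
    refine Finset.sum_congr rfl (fun x _ => ?_)
    by_cases h : ∀ j ∈ G.neighborFinset i, ∀ t' ≤ t, ztraj x j t' = ω j t'
    · rw [if_pos h]
      have h1 : (∏ j ∈ G.neighborFinset i, f j x) = 1 :=
        Finset.prod_eq_one (fun j hj => by simp only [hf]; exact if_pos (h j hj))
      rw [h1, one_mul]
    · rw [if_neg h]
      push_neg at h
      obtain ⟨j, hj, hjbad⟩ := h
      rw [Finset.prod_eq_zero hj, zero_mul]
      simp only [hf, ite_eq_right_iff, one_ne_zero]
      intro hc
      exact absurd (fun t' ht' => hc t' ht') (by push_neg; exact hjbad)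
  rw [lhs_eq, key _ (le_refl _)]
  refine Finset.prod_congr rfl (fun j hj => ?_)
  refine Finset.sum_congr rfl (fun x _ => ?_)
  simp only [hf, ite_mul, one_mul, zero_mul]
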